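/- The Gauss measure, i.e. the Borel measure on [0,1) with density x ↦ 1/(log 2 · (1+x)) with respect to Lebesgue measure, is a probability measure and is invariant under the Gauss map: the Gauss map is measure-preserving with respect to this measure. -/

import Mathlib

open MeasureTheory Set
open scoped ENNReal

/-- The Gauss map `T : [0,1) → [0,1)`, `T 0 = 0` and `T x = 1/x - ⌊1/x⌋` for `x ≠ 0`. -/
noncomputable def gaussMap : ℝ → ℝ := fun x => if x = 0 then 0 else Int.fract (1 / x)

/-- The Gauss measure: the Borel measure on `[0,1)` with density
`x ↦ 1 / (log 2 * (1 + x))` with respect to Lebesgue measure. -/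
noncomputable def gaussMeasure : Measure ℝ :=
  (volume.restrict (Set.Ico (0 : ℝ) 1)).withDensity
    fun x => ENNReal.ofReal (1 / (Real.log 2 * (1 + x)))

noncomputable def gaussDensity : ℝ → ℝ≥0∞ :=
  fun x => ENNReal.ofReal (1 / (Real.log 2 * (1 + x)))

noncomputable def nuG : Measure ℝ := volume.withDensity gaussDensity

lemma gaussMeasure_eq : gaussMeasure = nuG.restrict (Set.Ico (0:ℝ) 1) := by
  rw [gaussMeasure, nuG, restrict_withDensity measurableSet_Ico]
  rfl

lemma measurable_gaussMap : Measurable gaussMap := by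
  have h : MeasurableSet {x : ℝ | x = 0} := by
    simpa using (measurableSet_singleton (0:ℝ))
  exact Measurable.ite h measurable_const
    (Measurable.fract (measurable_const.div measurable_id))

lemma nuG_Icc {c d : ℝ} (hc : 0 ≤ c) (hcd : c ≤ d) :
    nuG (Set.Icc c d) =
      ENNReal.ofReal (Real.log (1+d) / Real.log 2 - Real.log (1+c) / Real.log 2) := by
  have hlog : 0 < Real.log 2 := Real.log_pos (by norm_num)
  have hcont : ContinuousOn (fun x : ℝ => 1 / (Real.log 2 * (1 + x))) (Set.Icc c d) := by
    apply ContinuousOn.div continuousOn_const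
    · exact continuousOn_const.mul (continuousOn_const.add (continuousOn_id))
    · intro x hx
      have : (0:ℝ) < 1 + x := by linarith [hx.1]
      positivity
  have hint : IntegrableOn (fun x : ℝ => 1 / (Real.log 2 * (1 + x))) (Set.Icc c d) :=
    hcont.integrableOn_compact isCompact_Icc
  rw [nuG, withDensity_apply _ measurableSet_Icc]
  have hnn : 0 ≤ᵐ[volume.restrict (Set.Icc c d)]
      (fun x : ℝ => 1 / (Real.log 2 * (1 + x))) := by
    refine (ae_restrict_iff' measurableSet_Icc).2 (ae_of_all _ fun x hx => ?_)
    have : (0:ℝ) < 1 + x := by linarith [hx.1]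
    positivity
  simp only [gaussDensity]
  rw [← ofReal_integral_eq_lintegral_ofReal hint hnn]
  congr 1
  have h1 : ∫ x in Set.Icc c d, 1 / (Real.log 2 * (1 + x)) =
      ∫ x in c..d, 1 / (Real.log 2 * (1 + x)) := by
    rw [intervalIntegral.integral_of_le hcd, MeasureTheory.integral_Icc_eq_integral_Ioc]
  rw [h1]
  have h2 : ∀ x : ℝ, 1 / (Real.log 2 * (1 + x)) = (Real.log 2)⁻¹ * (1 + x)⁻¹ := by
    intro x; field_simp
  simp_rw [h2]
  rw [intervalIntegral.integral_const_mul]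
  have h3 : (∫ x in c..d, (1 + x)⁻¹) = ∫ x in (1+c)..(1+d), x⁻¹ :=
    intervalIntegral.integral_comp_add_left (fun x => x⁻¹) 1
  rw [h3, integral_inv (by
    intro h
    rcases Set.mem_uIcc.1 h with ⟨h1', _⟩ | ⟨_, h2'⟩ <;> linarith)]
  rw [Real.log_div (by linarith) (by linarith)]
  field_simp

lemma nuG_singleton (x : ℝ) : nuG {x} = 0 := by
  rw [nuG, withDensity_apply _ (measurableSet_singleton x)]
  simp

open Filter Topology

lemma hlogpos : 0 < Real.log 2 := Real.log_pos (by norm_num)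

lemma tendsto_gauss_g {a : ℝ} :
    Tendsto (fun n : ℕ => Real.log (1 + a/((n:ℝ)+1)) / Real.log 2) atTop (𝓝 0) := by
  have h1 : Tendsto (fun n : ℕ => ((n:ℝ)+1)) atTop atTop :=
    tendsto_atTop_add_const_right _ 1 tendsto_natCast_atTop_atTop
  have h0 : Tendsto (fun n : ℕ => a/((n:ℝ)+1)) atTop (𝓝 0) :=
    Tendsto.div_atTop tendsto_const_nhds h1
  have h2 : Tendsto (fun n : ℕ => 1 + a/((n:ℝ)+1)) atTop (𝓝 1) := by
    simpa using tendsto_const_nhds.add h0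
  have h3 : Tendsto (fun n : ℕ => Real.log (1 + a/((n:ℝ)+1))) atTop (𝓝 0) := by
    have := ((Real.continuousAt_log (by norm_num : (1:ℝ) ≠ 0)).tendsto).comp h2
    simpa [Function.comp_def] using this
  have h4 := h3.div_const (Real.log 2)
  simpa using h4

lemma tsum_gauss {a : ℝ} (ha0 : 0 ≤ a) (ha1 : a < 1) :
    (∑' n : ℕ, nuG (Set.Icc (1/((n:ℝ)+1+a)) (1/((n:ℝ)+1)))) =
      ENNReal.ofReal (Real.log (1+a) / Real.log 2) := by
  set g : ℕ → ℝ := fun n => Real.log (1 + a/((n:ℝ)+1)) / Real.log 2 with hgdef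
  have hg_eq : ∀ n : ℕ, g n =
      (Real.log ((n:ℝ)+1+a) - Real.log ((n:ℝ)+1)) / Real.log 2 := by
    intro n
    have hn1 : (0:ℝ) < (n:ℝ)+1 := by positivity
    have : (1:ℝ) + a/((n:ℝ)+1) = ((n:ℝ)+1+a)/((n:ℝ)+1) := by field_simp
    simp only [hgdef, this]
    rw [Real.log_div (by positivity) (by positivity)]
  have hterm : ∀ n : ℕ,
      nuG (Set.Icc (1/((n:ℝ)+1+a)) (1/((n:ℝ)+1))) = ENNReal.ofReal (g n - g (n+1)) := by
    intro n
    have hn1 : (0:ℝ) < (n:ℝ)+1 := by positivity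
    have hna : (0:ℝ) < (n:ℝ)+1+a := by linarith
    have hc : (0:ℝ) ≤ 1/((n:ℝ)+1+a) := by positivity
    have hcd : 1/((n:ℝ)+1+a) ≤ 1/((n:ℝ)+1) :=
      one_div_le_one_div_of_le hn1 (by linarith)
    rw [nuG_Icc hc hcd]
    congr 1
    have e1 : (1:ℝ) + 1/((n:ℝ)+1) = ((n:ℝ)+2)/((n:ℝ)+1) := by field_simp; ring
    have e2 : (1:ℝ) + 1/((n:ℝ)+1+a) = ((n:ℝ)+2+a)/((n:ℝ)+1+a) := by field_simp; ring
    rw [e1, e2, Real.log_div (by positivity) (by positivity),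
      Real.log_div (by positivity) (by positivity), hg_eq, hg_eq]
    push_cast
    ring
  simp_rw [hterm]
  have hmono : ∀ n : ℕ, g (n+1) ≤ g n := by
    intro n
    have hn1 : (0:ℝ) < (n:ℝ)+1 := by positivity
    have hn2 : (0:ℝ) < (n:ℝ)+2 := by positivity
    simp only [hgdef]
    push_cast
    gcongr <;> linarith
  have hpart : ∀ N : ℕ, (∑ n ∈ Finset.range N, ENNReal.ofReal (g n - g (n+1)))
      = ENNReal.ofReal (g 0 - g N) := by
    intro N
    rw [← ENNReal.ofReal_sum_of_nonneg (fun n _ => by linarith [hmono n])]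
    congr 1
    exact Finset.sum_range_sub' g N
  have hlim : Tendsto (fun N : ℕ => ENNReal.ofReal (g 0 - g N)) atTop
      (𝓝 (ENNReal.ofReal (g 0 - 0))) := by
    exact (ENNReal.continuous_ofReal.tendsto _).comp
      (tendsto_const_nhds.sub tendsto_gauss_g)
  have h5 : Tendsto (fun N : ℕ => ∑ n ∈ Finset.range N, ENNReal.ofReal (g n - g (n+1)))
      atTop (𝓝 (∑' n : ℕ, ENNReal.ofReal (g n - g (n+1)))) :=
    ENNReal.tendsto_nat_tsum _
  have := tendsto_nhds_unique h5 (by simpa only [hpart] using hlim :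
    Tendsto (fun N : ℕ => ∑ n ∈ Finset.range N, ENNReal.ofReal (g n - g (n+1)))
      atTop (𝓝 (ENNReal.ofReal (g 0 - 0))))
  rw [this]
  congr 1
  simp [hgdef]

lemma gaussMap_nonneg (x : ℝ) : 0 ≤ gaussMap x := by
  unfold gaussMap
  split
  · exact le_refl 0
  · exact Int.fract_nonneg _

lemma gaussMap_lt_one (x : ℝ) : gaussMap x < 1 := by
  unfold gaussMap
  split
  · norm_num
  · exact Int.fract_lt_one _

lemma preimage_gauss {a : ℝ} (ha0 : 0 ≤ a) (ha1 : a < 1) :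
    gaussMap ⁻¹' (Set.Iic a) ∩ Set.Ico (0:ℝ) 1 =
      ({0} ∪ ⋃ n : ℕ, Set.Icc (1/((n:ℝ)+1+a)) (1/((n:ℝ)+1))) ∩ Set.Ico (0:ℝ) 1 := by
  ext x
  simp only [Set.mem_inter_iff, Set.mem_preimage, Set.mem_Iic, Set.mem_union,
    Set.mem_singleton_iff, Set.mem_iUnion, Set.mem_Icc, Set.mem_Ico, and_congr_left_iff]
  intro hx
  obtain ⟨hx0, hx1⟩ := hx
  constructor
  · intro hTx
    by_cases h0 : x = 0
    · exact Or.inl h0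
    · right
      have hxpos : 0 < x := lt_of_le_of_ne hx0 (Ne.symm h0)
      have hinv : 1 < 1/x := one_lt_one_div hxpos hx1
      have hT : Int.fract (1/x) ≤ a := by
        simpa [gaussMap, h0] using hTx
      set k : ℤ := ⌊1/x⌋ with hk
      have hk1 : (1:ℤ) ≤ k := by
        rw [hk, Int.le_floor]
        push_cast
        linarith
      have hkle : (k:ℝ) ≤ 1/x := Int.floor_le _
      have hfr : Int.fract (1/x) = 1/x - k := rfl
      have hle : 1/x ≤ (k:ℝ) + a := by
        have := Int.fract_nonneg (1/x)
        have h2 : 1/x - (k:ℝ) ≤ a := by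
          rw [← Int.self_sub_floor] at hT
          exact hT
        linarith
      refine ⟨(k - 1).toNat, ?_, ?_⟩
      · have hcast : (((k-1).toNat : ℝ)) = (k:ℝ) - 1 := by
          have h' : ((k-1).toNat : ℤ) = k - 1 := Int.toNat_of_nonneg (by omega)
          rw [← Int.cast_natCast, h']
          push_cast
          ring
        rw [hcast]
        have hkpos : (0:ℝ) < (k:ℝ) + a := by
          have : (1:ℝ) ≤ (k:ℝ) := by exact_mod_cast hk1
          linarith
        have : 1/((k:ℝ) - 1 + 1 + a) ≤ 1/(1/x) := by
          apply one_div_le_one_div_of_le (by positivity) (by linarith)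
        rwa [one_div_one_div] at this
      · have hcast : (((k-1).toNat : ℝ)) = (k:ℝ) - 1 := by
          have h' : ((k-1).toNat : ℤ) = k - 1 := Int.toNat_of_nonneg (by omega)
          rw [← Int.cast_natCast, h']
          push_cast
          ring
        rw [hcast]
        have hkpos : (0:ℝ) < (k:ℝ) := by
          have : (1:ℝ) ≤ (k:ℝ) := by exact_mod_cast hk1
          linarith
        have : 1/(1/x) ≤ 1/((k:ℝ) - 1 + 1) := by
          apply one_div_le_one_div_of_le (by simpa using hkpos) (by simpa using hkle)
        rwa [one_div_one_div] at this
  · rintro (h0 | ⟨n, hn1, hn2⟩)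
    · subst h0
      simp only [gaussMap, if_pos rfl]
      exact ha0
    · have hna : (0:ℝ) < (n:ℝ)+1+a := by positivity
      have hxpos : 0 < x := lt_of_lt_of_le (by positivity) hn1
      have h0 : x ≠ 0 := ne_of_gt hxpos
      have hA : (n:ℝ)+1 ≤ 1/x := by
        have : 1/(1/((n:ℝ)+1)) ≤ 1/x := one_div_le_one_div_of_le hxpos hn2
        rwa [one_div_one_div] at this
      have hB : 1/x ≤ (n:ℝ)+1+a := by
        have : 1/x ≤ 1/(1/((n:ℝ)+1+a)) := one_div_le_one_div_of_le (by positivity) hn1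
        rwa [one_div_one_div] at this
      have hfl : ⌊1/x⌋ = (n:ℤ) + 1 := by
        rw [Int.floor_eq_iff]
        constructor
        · push_cast; linarith
        · push_cast; linarith
      simp only [gaussMap, if_neg h0]
      rw [Int.fract, hfl]
      push_cast
      linarith

lemma nuG_preimage {a : ℝ} (ha0 : 0 ≤ a) (ha1 : a < 1) :
    nuG (gaussMap ⁻¹' (Set.Iic a) ∩ Set.Ico (0:ℝ) 1) =
      ENNReal.ofReal (Real.log (1+a) / Real.log 2) := by
  rw [preimage_gauss ha0 ha1]
  set U : Set ℝ := ⋃ n : ℕ, Set.Icc (1/((n:ℝ)+1+a)) (1/((n:ℝ)+1)) with hU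
  set A : Set ℝ := {0} ∪ U with hA
  have hmemA : ∀ x ∈ A, 0 ≤ x ∧ x ≤ 1 := by
    rintro x (hx | hx)
    · simp only [Set.mem_singleton_iff] at hx; subst hx; norm_num
    · simp only [hU, Set.mem_iUnion, Set.mem_Icc] at hx
      obtain ⟨n, hn1, hn2⟩ := hx
      have h1 : (0:ℝ) < 1/((n:ℝ)+1+a) := by positivity
      have h2 : 1/((n:ℝ)+1) ≤ 1 := by
        rw [div_le_one (by positivity)]
        push_cast
        linarith [Nat.cast_nonneg (α := ℝ) n]
      exact ⟨le_of_lt (lt_of_lt_of_le h1 hn1), le_trans hn2 h2⟩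
  have h1 : nuG (A ∩ Set.Ico 0 1) = nuG A := by
    refine le_antisymm (measure_mono Set.inter_subset_left) ?_
    have hsub : A ⊆ (A ∩ Set.Ico 0 1) ∪ {1} := by
      intro x hx
      by_cases hx1 : x ∈ Set.Ico (0:ℝ) 1
      · exact Or.inl ⟨hx, hx1⟩
      · right
        obtain ⟨h0, h1'⟩ := hmemA x hx
        simp only [Set.mem_Ico, not_and, not_lt] at hx1
        exact le_antisymm h1' (hx1 h0)
    calc nuG A ≤ nuG ((A ∩ Set.Ico 0 1) ∪ {1}) := measure_mono hsub
      _ ≤ nuG (A ∩ Set.Ico 0 1) + nuG {1} := measure_union_le _ _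
      _ = nuG (A ∩ Set.Ico 0 1) := by rw [nuG_singleton]; simp
  rw [h1]
  have h2 : nuG A = nuG U := by
    refine le_antisymm ?_ (measure_mono Set.subset_union_right)
    calc nuG A ≤ nuG {0} + nuG U := measure_union_le _ _
      _ = nuG U := by rw [nuG_singleton]; simp
  rw [h2]
  have key : ∀ m n : ℕ, m < n →
      Disjoint (Set.Icc (1/((m:ℝ)+1+a)) (1/((m:ℝ)+1)))
        (Set.Icc (1/((n:ℝ)+1+a)) (1/((n:ℝ)+1))) := by
    intro m n hmn
    rw [Set.disjoint_left]
    rintro x ⟨hx1, hx2⟩ ⟨hy1, hy2⟩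
    have hm : (0:ℝ) < (m:ℝ)+1+a := by positivity
    have hmn' : ((m:ℝ)+1+a) < (n:ℝ)+1 := by
      have : (m:ℝ)+1 ≤ (n:ℝ) := by exact_mod_cast Nat.succ_le_of_lt hmn
      linarith
    have := one_div_lt_one_div_of_lt hm hmn'
    linarith
  have hdisj : Pairwise (Function.onFun Disjoint
      fun n : ℕ => Set.Icc (1/((n:ℝ)+1+a)) (1/((n:ℝ)+1))) := by
    intro m n hmn
    rcases hmn.lt_or_gt with h | h
    · exact key m n h
    · exact (key n m h).symm
  rw [hU, measure_iUnion hdisj fun n => measurableSet_Icc]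
  exact tsum_gauss ha0 ha1

instance : IsProbabilityMeasure gaussMeasure := by
  constructor
  rw [gaussMeasure_eq, Measure.restrict_apply_univ]
  have h1 : nuG (Set.Ico (0:ℝ) 1) = nuG (Set.Icc (0:ℝ) 1) := by
    refine le_antisymm (measure_mono Set.Ico_subset_Icc_self) ?_
    calc nuG (Set.Icc (0:ℝ) 1) ≤ nuG (Set.Ico (0:ℝ) 1 ∪ {1}) := by
          apply measure_mono
          intro x ⟨h0, h1⟩
          rcases lt_or_eq_of_le h1 with h | h
          · exact Or.inl ⟨h0, h⟩
          · exact Or.inr (by simp [h])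
      _ ≤ nuG (Set.Ico (0:ℝ) 1) + nuG {1} := measure_union_le _ _
      _ = nuG (Set.Ico (0:ℝ) 1) := by rw [nuG_singleton]; simp
  rw [h1, nuG_Icc le_rfl zero_le_one]
  norm_num [div_self (ne_of_gt hlogpos)]

/-- The Gauss measure is a probability measure, and the Gauss map is
measure-preserving with respect to it. -/
theorem gaussMeasure_isProbability_and_gaussMap_measurePreserving :
    IsProbabilityMeasure gaussMeasure ∧
      MeasurePreserving gaussMap gaussMeasure gaussMeasure := by
  refine ⟨inferInstance, measurable_gaussMap, ?_⟩
  haveI : IsProbabilityMeasure (Measure.map gaussMap gaussMeasure) :=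
    Measure.isProbabilityMeasure_map measurable_gaussMap.aemeasurable
  refine Measure.ext_of_Iic _ _ fun a => ?_
  rw [Measure.map_apply measurable_gaussMap measurableSet_Iic]
  rw [gaussMeasure_eq, Measure.restrict_apply (measurable_gaussMap measurableSet_Iic),
    Measure.restrict_apply measurableSet_Iic]
  rcases lt_or_ge a 0 with ha | ha0
  · have h1 : gaussMap ⁻¹' Set.Iic a ∩ Set.Ico (0:ℝ) 1 = ∅ := by
      ext x
      simp only [Set.mem_inter_iff, Set.mem_preimage, Set.mem_Iic, Set.mem_Ico,
        Set.mem_empty_iff_false, iff_false, not_and]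
      intro hT
      exact fun h0 _ => absurd (le_trans (gaussMap_nonneg x) hT) (by linarith)
    have h2 : Set.Iic a ∩ Set.Ico (0:ℝ) 1 = ∅ := by
      ext x
      simp only [Set.mem_inter_iff, Set.mem_Iic, Set.mem_Ico,
        Set.mem_empty_iff_false, iff_false, not_and]
      intro hT h0
      linarith
    rw [h1, h2]
  · rcases lt_or_ge a 1 with ha1 | ha1
    · rw [nuG_preimage ha0 ha1]
      have h2 : Set.Iic a ∩ Set.Ico (0:ℝ) 1 = Set.Icc 0 a := by
        ext x
        simp only [Set.mem_inter_iff, Set.mem_Iic, Set.mem_Ico, Set.mem_Icc]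
        constructor
        · rintro ⟨h1, h2, h3⟩; exact ⟨h2, h1⟩
        · rintro ⟨h1, h2⟩; exact ⟨h2, h1, by linarith⟩
      rw [h2, nuG_Icc le_rfl ha0]
      norm_num
    · have h1 : gaussMap ⁻¹' Set.Iic a ∩ Set.Ico (0:ℝ) 1 = Set.Ico (0:ℝ) 1 := by
        ext x
        simp only [Set.mem_inter_iff, Set.mem_preimage, Set.mem_Iic, Set.mem_Ico,
          and_iff_right_iff_imp]
        intro _
        linarith [gaussMap_lt_one x]
      have h2 : Set.Iic a ∩ Set.Ico (0:ℝ) 1 = Set.Ico (0:ℝ) 1 := by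
        ext x
        simp only [Set.mem_inter_iff, Set.mem_Iic, Set.mem_Ico, and_iff_right_iff_imp]
        rintro ⟨_, hx⟩
        linarith
      rw [h1, h2]
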